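/- Let f be a transcendental entire function such that T(r,f)/log M(r,f) → 1 as r → ∞ along a set E of positive upper logarithmic density. For a given constant c with 0 < c < 1/4 and for r ∈ E, set I_r = {θ ∈ [0,2π) : log|f(re^{iθ})| ≤ (1−c) log M(r,f)}. Then the Lebesgue measure of I_r tends to 0 as r → ∞ along E. -/

import Mathlib

open Filter MeasureTheory

/-- The maximum modulus `M(r,f) = max_{|z|=r} |f z|`. -/
noncomputable def maxMod (f : ℂ → ℂ) (r : ℝ) : ℝ :=
  sSup ((fun z => ‖f z‖) '' Metric.sphere (0 : ℂ) r)

/-- `f` agrees with a polynomial function. -/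
def IsPolyFun (f : ℂ → ℂ) : Prop :=
  ∃ p : Polynomial ℂ, ∀ z, f z = p.eval z

/-- The positive part of the logarithm, `log⁺ x = max 0 (log x)`. -/
noncomputable def posLog (x : ℝ) : ℝ := max 0 (Real.log x)

/-- The Nevanlinna characteristic of an entire function:
`T(r,f) = (1/2π) ∫₀^{2π} log⁺ |f(r e^{iθ})| dθ`. -/
noncomputable def nevT (f : ℂ → ℂ) (r : ℝ) : ℝ :=
  (2 * Real.pi)⁻¹ *
    ∫ θ in (0 : ℝ)..(2 * Real.pi), posLog (‖f (r * Complex.exp (θ * Complex.I))‖)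

/-- The upper logarithmic density of a set `E ⊆ [1,∞)`:
`limsup_{r→∞} (∫_{E ∩ [1,r]} dt/t) / log r`. -/
noncomputable def upperLogDens (E : Set ℝ) : ℝ :=
  limsup (fun r : ℝ => (∫ t in E ∩ Set.Icc 1 r, 1 / t) / Real.log r) atTop

lemma posLog_nonneg (x : ℝ) : 0 ≤ posLog x := le_max_left _ _

lemma posLog_le_posLog {x y : ℝ} (hx : 0 ≤ x) (hxy : x ≤ y) :
    posLog x ≤ posLog y := by
  unfold posLog
  rcases le_or_gt x 1 with h | h
  · have h0 : Real.log x ≤ 0 := Real.log_nonpos hx h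
    simp [max_le_iff, h0, le_max_left]
  · have hx1 : Real.log x ≤ Real.log y := Real.log_le_log (by linarith) hxy
    exact max_le_max le_rfl hx1

lemma posLog_eq_log_max (x : ℝ) (hx : 0 ≤ x) : posLog x = Real.log (max 1 x) := by
  unfold posLog
  rcases le_or_gt x 1 with h | h
  · have h0 : Real.log x ≤ 0 := Real.log_nonpos hx h
    rw [max_eq_left h, Real.log_one, max_eq_left h0]
  · rw [max_eq_right h.le, max_eq_right (Real.log_nonneg h.le)]

lemma nevT_nonneg (f : ℂ → ℂ) (r : ℝ) : 0 ≤ nevT f r := by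
  unfold nevT
  have : 0 ≤ ∫ θ in (0:ℝ)..(2*Real.pi),
      posLog (‖f (r * Complex.exp (θ * Complex.I))‖) :=
    intervalIntegral.integral_nonneg (by positivity) (fun θ _ => posLog_nonneg _)
  positivity

lemma key_bound (f : ℂ → ℂ) (hf : Differentiable ℂ f) (c : ℝ) (hc : 0 < c) (hc1 : c < 1)
    (r : ℝ) (hr : 0 ≤ r) (hL : 0 < Real.log (maxMod f r)) :
    volume {θ : ℝ | θ ∈ Set.Ico 0 (2 * Real.pi) ∧
        Real.log (‖f (r * Complex.exp (θ * Complex.I))‖) ≤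
          (1 - c) * Real.log (maxMod f r)} ≤
      ENNReal.ofReal (2 * Real.pi / c * (1 - nevT f r / Real.log (maxMod f r))) := by
  have hpi : (0:ℝ) < Real.pi := Real.pi_pos
  set M := maxMod f r with hMdef
  set L := Real.log M with hLdef
  -- continuity facts
  have hmap : Continuous fun θ : ℝ => ((r : ℂ) * Complex.exp (↑θ * Complex.I)) :=
    continuous_const.mul (Complex.continuous_exp.comp
      (Complex.continuous_ofReal.mul continuous_const))
  have habscont : Continuous fun θ : ℝ =>
      ‖f ((r:ℂ) * Complex.exp (↑θ * Complex.I))‖ :=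
    continuous_norm.comp (hf.continuous.comp hmap)
  -- the bound |f(re^{iθ})| ≤ M
  have hbdd : BddAbove ((fun z => ‖f z‖) '' Metric.sphere (0:ℂ) r) :=
    (isCompact_sphere 0 r).bddAbove_image
      ((continuous_norm.comp hf.continuous).continuousOn)
  have habs : ∀ θ : ℝ, ‖f ((r:ℂ) * Complex.exp (↑θ * Complex.I))‖ ≤ M := by
    intro θ
    apply le_csSup hbdd
    refine ⟨(r:ℂ) * Complex.exp (↑θ * Complex.I), ?_, rfl⟩
    simp [Complex.norm_exp_ofReal_mul_I, abs_of_nonneg hr, norm_mul, Complex.norm_real]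
  -- g = posLog ∘ |f|
  set g : ℝ → ℝ := fun θ => posLog (‖f ((r:ℂ) * Complex.exp (↑θ * Complex.I))‖)
    with hgdef
  have hgcont : Continuous g := by
    have : Continuous fun θ : ℝ =>
        Real.log (max 1 (‖f ((r:ℂ) * Complex.exp (↑θ * Complex.I))‖)) := by
      apply Continuous.log (continuous_const.max habscont)
      intro θ
      have : (1:ℝ) ≤ max 1 (‖f ((r:ℂ) * Complex.exp (↑θ * Complex.I))‖) :=
        le_max_left _ _
      linarith
    convert this using 1
    funext θ
    exact posLog_eq_log_max _ (norm_nonneg _)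
  have hgnonneg : ∀ θ, 0 ≤ g θ := fun θ => posLog_nonneg _
  have hgleL : ∀ θ, g θ ≤ L := by
    intro θ
    have := posLog_le_posLog (norm_nonneg _) (habs θ)
    refine this.trans ?_
    unfold posLog
    rw [← hLdef, max_eq_right hL.le]
  -- the sets
  set A : Set ℝ := {θ : ℝ | θ ∈ Set.Ico 0 (2 * Real.pi) ∧
      Real.log (‖f ((r:ℂ) * Complex.exp (↑θ * Complex.I))‖) ≤ (1 - c) * L}
    with hAdef
  have hAmeas : MeasurableSet A := by
    apply (measurableSet_Ico.inter _)
    exact (Real.measurable_log.comp habscont.measurable) measurableSet_Iic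
  set S : Set ℝ := Set.Ioc 0 (2 * Real.pi) with hSdef
  set B : Set ℝ := A \ {0} with hBdef
  have hBmeas : MeasurableSet B := hAmeas.diff (measurableSet_singleton 0)
  have hBS : B ⊆ S := by
    rintro θ ⟨⟨⟨h0, h2⟩, _⟩, hne⟩
    exact ⟨lt_of_le_of_ne h0 (fun h => hne (by simpa using h.symm)), h2.le⟩
  have hvolA : volume A = volume B :=
    (measure_diff_null (by simp)).symm
  have hSfin : volume S ≠ ⊤ := by
    rw [hSdef, Real.volume_Ioc]; exact ENNReal.ofReal_ne_top
  have hBfin : volume B ≠ ⊤ := fun h => hSfin (eq_top_mono (measure_mono hBS) h)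
  have hSBfin : volume (S \ B) ≠ ⊤ :=
    fun h => hSfin (eq_top_mono (measure_mono Set.diff_subset) h)
  set a : ℝ := (volume B).toReal with hadef
  set b : ℝ := (volume (S \ B)).toReal with hbdef
  have hSBmeas : MeasurableSet (S \ B) := measurableSet_Ioc.diff hBmeas
  have hab : a + b = 2 * Real.pi := by
    have hun : volume B + volume (S \ B) = volume S := by
      rw [← measure_union disjoint_sdiff_self_right hSBmeas, Set.union_diff_cancel hBS]
    have h2 : (volume S).toReal = 2 * Real.pi := by
      rw [hSdef, Real.volume_Ioc]
      rw [ENNReal.toReal_ofReal (by norm_num [Real.pi_pos.le])]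
      ring
    rw [hadef, hbdef, ← ENNReal.toReal_add hBfin hSBfin, hun, h2]
  have ha0 : 0 ≤ a := ENNReal.toReal_nonneg
  have hb0 : 0 ≤ b := ENNReal.toReal_nonneg
  -- integrability
  have hIS : IntegrableOn g S := hgcont.integrableOn_Ioc
  -- integral splitting
  have hsplit : ∫ θ in S, g θ = (∫ θ in B, g θ) + ∫ θ in S \ B, g θ := by
    rw [← setIntegral_union disjoint_sdiff_self_right hSBmeas
      (hIS.mono_set hBS) (hIS.mono_set Set.diff_subset), Set.union_diff_cancel hBS]
  -- bound on B
  have hIB : (∫ θ in B, g θ) ≤ (1 - c) * L * a := by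
    have : (∫ θ in B, g θ) ≤ ∫ _θ in B, (1 - c) * L := by
      apply setIntegral_mono_on (hIS.mono_set hBS) (integrableOn_const hBfin)
        hBmeas
      intro θ hθ
      have hθA : θ ∈ A := hθ.1
      have hlog : Real.log (‖f ((r:ℂ) * Complex.exp (↑θ * Complex.I))‖)
          ≤ (1 - c) * L := hθA.2
      exact max_le (by nlinarith) hlog
    rw [setIntegral_const] at this
    rw [smul_eq_mul, measureReal_def] at this
    linarith [this]
  have hISB : (∫ θ in S \ B, g θ) ≤ L * b := by
    have : (∫ θ in S \ B, g θ) ≤ ∫ _θ in S \ B, L := by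
      exact setIntegral_mono_on (hIS.mono_set Set.diff_subset)
        (integrableOn_const hSBfin) hSBmeas (fun θ _ => hgleL θ)
    rw [setIntegral_const, smul_eq_mul, measureReal_def] at this
    linarith [this]
  -- relate interval integral to set integral
  have hintEq : (∫ θ in (0:ℝ)..(2*Real.pi), g θ) = ∫ θ in S, g θ := by
    rw [intervalIntegral.integral_of_le (by positivity), hSdef]
  set I : ℝ := ∫ θ in S, g θ with hIdef
  have hT : nevT f r = (2 * Real.pi)⁻¹ * I := by
    rw [nevT, ← hintEq]
  have hImain : I ≤ 2 * Real.pi * L - c * L * a := by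
    have := hsplit
    nlinarith [hIB, hISB, hab]
  -- conclude
  have hInn : 0 ≤ I := setIntegral_nonneg (measurableSet_Ioc) (fun θ _ => hgnonneg θ)
  have hfinal : a ≤ 2 * Real.pi / c * (1 - nevT f r / L) := by
    rw [hT]
    rw [div_mul_eq_mul_div, le_div_iff₀ hc]
    have hrew : 2 * Real.pi * (1 - (2 * Real.pi)⁻¹ * I / L) = (2*Real.pi*L - I)/L := by
      field_simp
    rw [hrew, le_div_iff₀ hL]
    nlinarith [hImain]
  calc volume A = ENNReal.ofReal a := by
        rw [hvolA, hadef, ENNReal.ofReal_toReal hBfin]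
    _ ≤ ENNReal.ofReal (2 * Real.pi / c * (1 - nevT f r / L)) :=
        ENNReal.ofReal_le_ofReal hfinal

/-- If `f` is a transcendental entire function with `T(r,f) ∼ log M(r,f)` as `r → ∞` along a
set `E` of positive upper logarithmic density, and `0 < c < 1/4`, then the Lebesgue measure of
`I_r = {θ ∈ [0,2π) : log |f(r e^{iθ})| ≤ (1 − c) log M(r,f)}` tends to `0` as `r → ∞`
along `E`. -/
theorem stmt16 (f : ℂ → ℂ) (hf : Differentiable ℂ f) (hft : ¬ IsPolyFun f)
    (E : Set ℝ) (hE : E ⊆ Set.Ici 1) (hEdens : 0 < upperLogDens E)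
    (hsim : Tendsto (fun r => nevT f r / Real.log (maxMod f r)) (atTop ⊓ 𝓟 E) (nhds 1))
    (c : ℝ) (hc : 0 < c) (hc' : c < 1 / 4) :
    Tendsto (fun r : ℝ =>
        volume {θ : ℝ | θ ∈ Set.Ico 0 (2 * Real.pi) ∧
          Real.log (‖f (r * Complex.exp (θ * Complex.I))‖) ≤
            (1 - c) * Real.log (maxMod f r)})
      (atTop ⊓ 𝓟 E) (nhds 0) := by
  set l := atTop ⊓ 𝓟 E with hldef
  have hmemE : ∀ᶠ r in l, r ∈ E :=
    Filter.eventually_inf_principal.mpr (Filter.Eventually.of_forall (fun r hr => hr))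
  have hr1 : ∀ᶠ r in l, (1:ℝ) ≤ r := hmemE.mono (fun r hr => hE hr)
  have hhalf : ∀ᶠ r in l, (1:ℝ)/2 < nevT f r / Real.log (maxMod f r) :=
    hsim.eventually (eventually_gt_nhds (by norm_num))
  have hLpos : ∀ᶠ r in l, 0 < Real.log (maxMod f r) := by
    filter_upwards [hhalf] with r hr
    by_contra h
    push_neg at h
    rcases lt_or_eq_of_le h with h' | h'
    · have : nevT f r / Real.log (maxMod f r) ≤ 0 :=
        div_nonpos_of_nonneg_of_nonpos (nevT_nonneg f r) h'.le
      linarith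
    · rw [h', div_zero] at hr
      linarith
  have hub : ∀ᶠ (r : ℝ) in l,
      volume {θ : ℝ | θ ∈ Set.Ico 0 (2 * Real.pi) ∧
          Real.log (‖f (r * Complex.exp (θ * Complex.I))‖) ≤
            (1 - c) * Real.log (maxMod f r)} ≤
        ENNReal.ofReal (2 * Real.pi / c * (1 - nevT f r / Real.log (maxMod f r))) := by
    filter_upwards [hr1, hLpos] with r h1 h2
    exact key_bound f hf c hc (by linarith) r (by linarith) h2
  have htend : Tendsto
      (fun r => ENNReal.ofReal (2 * Real.pi / c * (1 - nevT f r / Real.log (maxMod f r))))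
      l (nhds 0) := by
    have h1 : Tendsto (fun r => 2 * Real.pi / c * (1 - nevT f r / Real.log (maxMod f r)))
        l (nhds 0) := by
      have := ((tendsto_const_nhds : Tendsto (fun _ : ℝ => (1:ℝ)) l (nhds 1)).sub hsim).const_mul (2 * Real.pi / c)
      simpa using this
    have h2 := (ENNReal.continuous_ofReal.tendsto 0).comp h1
    simpa [Function.comp_def] using h2
  apply tendsto_of_tendsto_of_tendsto_of_le_of_le' tendsto_const_nhds htend
  · exact Filter.Eventually.of_forall (fun r => zero_le)
  · exact hub
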